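/- Let (X, d) be a non-Archimedean metric space and let {B_m}_{m=1}^∞ be a sequence of balls in X. If B_m converges to a non-empty closed subset D of X in the Hausdorff distance d_H, then D is either a ball in X or a one-point set {x} for some x ∈ X. -/

import Mathlib

open scoped ENNReal

/-- A ball in a metric space: an open or closed ball of positive radius. -/
def IsBall {X : Type*} [MetricSpace X] (B : Set X) : Prop :=
  ∃ (a : X) (r : ℝ), 0 < r ∧ (B = Metric.ball a r ∨ B = Metric.closedBall a r)

/-- Key lemma: if `D` is the Hausdorff limit of balls in a non-Archimedean space,
`u, y ∈ D` with `dist u y > 0`, and `dist u z ≤ dist u y`, then `z ∈ D`. -/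
lemma key_mem {X : Type*} [MetricSpace X]
    (hna : ∀ x y z : X, dist x z ≤ max (dist x y) (dist y z))
    (B : ℕ → Set X) (hB : ∀ m, IsBall (B m))
    (D : Set X) (hDc : IsClosed D)
    (hconv : Filter.Tendsto (fun m => EMetric.hausdorffEdist (B m) D)
      Filter.atTop (nhds 0))
    {u y z : X} (hu : u ∈ D) (hy : y ∈ D) (hpos : 0 < dist u y)
    (hz : dist u z ≤ dist u y) : z ∈ D := by
  rw [← hDc.closure_eq, Metric.mem_closure_iff]
  intro δ hδ
  set t := dist u y with ht
  set δ' : ℝ := min δ (t / 2) with hδ'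
  have hδ'pos : 0 < δ' := lt_min hδ (by positivity)
  have hδ't : δ' < t := lt_of_le_of_lt (min_le_right _ _) (by linarith)
  -- find m with small Hausdorff distance
  rw [ENNReal.tendsto_atTop_zero] at hconv
  obtain ⟨N, hN⟩ := hconv (ENNReal.ofReal (δ' / 2)) (by
    simpa using ENNReal.ofReal_pos.2 (by positivity))
  have hm : EMetric.hausdorffEdist (B N) D < ENNReal.ofReal δ' := by
    refine lt_of_le_of_lt (hN N le_rfl) ?_
    exact ENNReal.ofReal_lt_ofReal_iff hδ'pos |>.2 (by linarith)
  have hmD : EMetric.hausdorffEdist D (B N) < ENNReal.ofReal δ' := by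
    exact lt_of_eq_of_lt Metric.hausdorffEDist_comm hm
  obtain ⟨u', hu'B, hu'⟩ := EMetric.exists_edist_lt_of_hausdorffEdist_lt hu hmD
  obtain ⟨y', hy'B, hy'⟩ := EMetric.exists_edist_lt_of_hausdorffEdist_lt hy hmD
  rw [edist_lt_ofReal] at hu' hy'
  -- d(u', y') ≥ t
  have huy' : t ≤ dist u' y' := by
    have h1 : dist u y ≤ max (dist u u') (dist u' y) := hna u u' y
    have h2 : dist u' y ≤ max (dist u' y') (dist y' y) := hna u' y' y
    have h3 : dist y' y = dist y y' := dist_comm _ _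
    rcases le_max_iff.1 h1 with h | h
    · linarith
    · rcases le_max_iff.1 h2 with h' | h' <;> [linarith; (rw [h3] at h'; linarith)]
  -- d(u', z) ≤ t
  have hu'z : dist u' z ≤ t := by
    have h1 : dist u' z ≤ max (dist u' u) (dist u z) := hna u' u z
    have h2 : dist u' u = dist u u' := dist_comm _ _
    rcases le_max_iff.1 h1 with h | h <;> [(rw [h2] at h; linarith); linarith]
  -- show z ∈ B N
  obtain ⟨a, r, hr, hball⟩ := hB N
  have hzB : z ∈ B N := by
    rcases hball with h | h
    · -- open ball
      rw [h] at hu'B hy'B ⊢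
      rw [Metric.mem_ball] at hu'B hy'B ⊢
      rw [dist_comm u' a] at hu'B
      rw [dist_comm y' a] at hy'B
      rw [dist_comm z a]
      have h4 : dist u' y' ≤ max (dist u' a) (dist a y') := hna u' a y'
      have h5 : dist u' y' < r := by
        rcases le_max_iff.1 h4 with h | h
        · calc dist u' y' ≤ dist u' a := h
            _ = dist a u' := dist_comm _ _
            _ < r := hu'B
        · exact lt_of_le_of_lt h hy'B
      have h6 : dist a z ≤ max (dist a u') (dist u' z) := hna a u' z
      rcases le_max_iff.1 h6 with h | h
      · exact lt_of_le_of_lt h hu'B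
      · exact lt_of_le_of_lt h (lt_of_le_of_lt (hu'z.trans huy') h5)
    · -- closed ball
      rw [h] at hu'B hy'B ⊢
      rw [Metric.mem_closedBall] at hu'B hy'B ⊢
      rw [dist_comm u' a] at hu'B
      rw [dist_comm y' a] at hy'B
      rw [dist_comm z a]
      have h4 : dist u' y' ≤ max (dist u' a) (dist a y') := hna u' a y'
      have h5 : dist u' y' ≤ r := by
        rcases le_max_iff.1 h4 with h | h
        · calc dist u' y' ≤ dist u' a := h
            _ = dist a u' := dist_comm _ _
            _ ≤ r := hu'B
        · exact le_trans h hy'B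
      have h6 : dist a z ≤ max (dist a u') (dist u' z) := hna a u' z
      rcases le_max_iff.1 h6 with h | h
      · exact le_trans h hu'B
      · exact le_trans h ((hu'z.trans huy').trans h5)
  -- z is within δ' of D
  obtain ⟨w, hwD, hw⟩ := EMetric.exists_edist_lt_of_hausdorffEdist_lt hzB hm
  rw [edist_lt_ofReal] at hw
  exact ⟨w, hwD, lt_of_lt_of_le hw (min_le_left _ _)⟩

theorem stmt_5 {X : Type*} [MetricSpace X]
    (hna : ∀ x y z : X, dist x z ≤ max (dist x y) (dist y z))
    (B : ℕ → Set X) (hB : ∀ m, IsBall (B m))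
    (D : Set X) (hD : D.Nonempty) (hDc : IsClosed D)
    (hconv : Filter.Tendsto (fun m => EMetric.hausdorffEdist (B m) D)
      Filter.atTop (nhds 0)) :
    IsBall D ∨ ∃ x : X, D = {x} := by
  obtain ⟨u, hu⟩ := hD
  by_cases hsing : ∀ y ∈ D, y = u
  · right
    exact ⟨u, Set.eq_singleton_iff_unique_mem.2 ⟨hu, hsing⟩⟩
  push_neg at hsing
  obtain ⟨v, hv, hvu⟩ := hsing
  have hvpos : 0 < dist u v := by
    rw [dist_pos]; exact fun h => hvu h.symm
  left
  -- D is bounded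
  have hbdd : BddAbove ((fun y => dist u y) '' D) := by
    rw [ENNReal.tendsto_atTop_zero] at hconv
    obtain ⟨N, hN⟩ := hconv 1 one_pos
    have hlt : EMetric.hausdorffEdist D (B N) < 2 := by
      rw [show EMetric.hausdorffEdist D (B N) = EMetric.hausdorffEdist (B N) D from Metric.hausdorffEDist_comm]
      exact lt_of_le_of_lt (hN N le_rfl) ENNReal.one_lt_two
    obtain ⟨a, r, hr, hball⟩ := hB N
    refine ⟨dist u a + r + 2, ?_⟩
    rintro x ⟨y, hy, rfl⟩
    obtain ⟨w, hwB, hw⟩ := EMetric.exists_edist_lt_of_hausdorffEdist_lt hy hlt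
    have hw' : dist y w < 2 := by
      have : (2 : ℝ≥0∞) = ENNReal.ofReal 2 := by norm_num
      rw [this, edist_lt_ofReal] at hw; exact hw
    have hwa : dist w a ≤ r := by
      rcases hball with h | h
      · rw [h, Metric.mem_ball] at hwB; linarith
      · rw [h, Metric.mem_closedBall] at hwB; linarith
    calc dist u y ≤ dist u w + dist w y := dist_triangle _ _ _
      _ ≤ (dist u a + dist a w) + dist w y := by
          linarith [dist_triangle u a w]
      _ ≤ dist u a + r + 2 := by
          rw [dist_comm a w, dist_comm w y]; linarith
  set R : ℝ := sSup ((fun y => dist u y) '' D) with hR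
  have hRv : dist u v ≤ R := le_csSup hbdd ⟨v, hv, rfl⟩
  have hRpos : 0 < R := lt_of_lt_of_le hvpos hRv
  have hDsub : D ⊆ Metric.closedBall u R := by
    intro z hz
    rw [Metric.mem_closedBall, dist_comm]
    exact le_csSup hbdd ⟨z, hz, rfl⟩
  by_cases hsph : ∃ z₀ ∈ D, dist u z₀ = R
  · obtain ⟨z₀, hz₀, hz₀R⟩ := hsph
    refine ⟨u, R, hRpos, Or.inr ?_⟩
    apply Set.Subset.antisymm hDsub
    intro z hz
    rw [Metric.mem_closedBall, dist_comm] at hz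
    exact key_mem hna B hB D hDc hconv hu hz₀ (hz₀R ▸ hRpos) (hz.trans hz₀R.ge)
  · push_neg at hsph
    refine ⟨u, R, hRpos, Or.inl ?_⟩
    apply Set.Subset.antisymm
    · intro z hz
      rw [Metric.mem_ball, dist_comm]
      exact lt_of_le_of_ne (le_csSup hbdd ⟨z, hz, rfl⟩) (hsph z hz)
    · intro z hz
      rw [Metric.mem_ball, dist_comm, hR] at hz
      obtain ⟨x, ⟨y, hy, rfl⟩, hxy⟩ := exists_lt_of_lt_csSup (Set.nonempty_of_mem (Set.mem_image_of_mem _ hv)) hz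
      exact key_mem hna B hB D hDc hconv hu hy (lt_of_le_of_lt dist_nonneg hxy) hxy.le
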